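/- Let H be a real Hilbert space, T : H → H nonexpansive, λ : [0,∞) → [0,1] measurable, and x a solution of ẋ(t) = λ(t)(T(x(t)) − x(t)). Then the function t ↦ ‖T(x(t)) − x(t)‖ is nonincreasing on [0,∞); more precisely, for almost every t, (d/dt)(½‖T(x(t)) − x(t)‖²) ≤ −λ(t)‖T(x(t)) − x(t)‖² + ‖ẋ(t)‖·‖T(x(t)) − x(t)‖ ≤ 0. -/

import Mathlib

open Filter MeasureTheory Set
open scoped RealInnerProductSpace Topology

set_option maxHeartbeats 1000000 in
/-- The fixed point residual `t ↦ ‖T(x(t)) − x(t)‖` is nonincreasing along the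
continuous Krasnosel'skiĭ–Mann dynamics; more precisely, a.e.
`(d/dt)(½‖T(x(t))−x(t)‖²) ≤ −λ(t)‖T(x(t))−x(t)‖² + ‖ẋ(t)‖·‖T(x(t))−x(t)‖ ≤ 0`. -/
theorem stmt1
    {H : Type*} [NormedAddCommGroup H] [InnerProductSpace ℝ H]
    (T : H → H) (hT : ∀ a b : H, ‖T a - T b‖ ≤ ‖a - b‖)
    (lam : ℝ → ℝ) (hlam_meas : Measurable lam)
    (hlam : ∀ t ≥ (0:ℝ), lam t ∈ Icc (0:ℝ) 1)
    (x xd : ℝ → H)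
    (hx : ∀ t ≥ (0:ℝ), HasDerivAt x (xd t) t)
    (hode : ∀ t ≥ (0:ℝ), xd t = lam t • (T (x t) - x t))
    (hTd : ∀ᵐ t ∂(volume.restrict (Ici (0:ℝ))),
      ∃ u : H, HasDerivAt (fun s => T (x s)) u t ∧ ‖u‖ ≤ ‖xd t‖) :
    AntitoneOn (fun t => ‖T (x t) - x t‖) (Ici 0) ∧
    ∀ᵐ t ∂(volume.restrict (Ici (0:ℝ))),
      ∀ D : ℝ, HasDerivAt (fun s => (1/2) * ‖T (x s) - x s‖ ^ 2) D t →
        D ≤ -(lam t) * ‖T (x t) - x t‖ ^ 2 + ‖xd t‖ * ‖T (x t) - x t‖ ∧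
        -(lam t) * ‖T (x t) - x t‖ ^ 2 + ‖xd t‖ * ‖T (x t) - x t‖ ≤ 0 := by
  have hTlip : LipschitzWith 1 T := by
    refine LipschitzWith.of_dist_le_mul fun a b => ?_
    rw [dist_eq_norm, dist_eq_norm, NNReal.coe_one, one_mul]
    exact hT a b
  set g : ℝ → H := fun t => T (x t) - x t with hgdef
  have hxc : ContinuousOn x (Ici 0) := fun t ht => ((hx t ht).continuousAt).continuousWithinAt
  have hgc : ContinuousOn g (Ici 0) :=
    (hTlip.continuous.comp_continuousOn hxc).sub hxc
  constructor
  · -- Antitone part: work in the completion of `H`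
    set e : H →ₗᵢ[ℝ] UniformSpace.Completion H :=
      UniformSpace.Completion.toComplₗᵢ with hedef
    set G : ℝ → UniformSpace.Completion H := fun s => e (g s) with hGdef
    have hGnorm : ∀ s, ‖G s‖ = ‖g s‖ := fun s => e.norm_map _
    have hGc : ContinuousOn G (Ici 0) := e.continuous.comp_continuousOn hgc
    have hy : ∀ t ≥ (0:ℝ), HasDerivAt (fun s => e (x s)) (lam t • G t) t := by
      intro t ht
      have h1 : HasDerivAt (e.toContinuousLinearMap ∘ x) (e.toContinuousLinearMap (xd t)) t :=
        (e.toContinuousLinearMap.hasFDerivAt).comp_hasDerivAt t (hx t ht)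
      have h2 : e.toContinuousLinearMap (xd t) = lam t • G t := by
        rw [hode t ht]
        exact e.toContinuousLinearMap.map_smul _ _
      rw [h2] at h1
      exact h1
    have key : ∀ t ∈ Ici (0:ℝ), ∀ r : ℝ, 0 < r →
        ∀ᶠ z in 𝓝[>] t, slope (fun s => ‖g s‖) t z < r := by
      intro t ht r hr
      obtain ⟨δ, hδpos, hδ⟩ := Metric.continuousWithinAt_iff.1 (hgc t ht) (r/8) (by positivity)
      have hmem : Ioo t (t + min δ 1) ∈ 𝓝[>] t :=
        Ioo_mem_nhdsGT_of_mem ⟨le_refl t, by have := lt_min hδpos one_pos; linarith⟩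
      filter_upwards [hmem] with z hz
      obtain ⟨hz1, hz2⟩ := hz
      have hzt : (0:ℝ) < z - t := by linarith
      have hsub : Icc t z ⊆ Ici (0:ℝ) := fun s hs => le_trans ht hs.1
      have hgclose : ∀ s ∈ Icc t z, ‖g s - g t‖ ≤ r/8 := by
        intro s hs
        have hs0 : s ∈ Ici (0:ℝ) := hsub hs
        have hdist : dist s t < δ := by
          rw [Real.dist_eq, abs_of_nonneg (by linarith [hs.1])]
          have : z - t < min δ 1 := by linarith
          have := this.trans_le (min_le_left _ _)
          linarith [hs.2]
        have := hδ hs0 hdist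
        rw [dist_eq_norm] at this
        exact this.le
      -- integrability of `s ↦ lam s • F s` for continuous `F`
      have hInt : ∀ F : ℝ → UniformSpace.Completion H, ContinuousOn F (Ici 0) →
          IntervalIntegrable (fun s => lam s • F s) volume t z := by
        intro F hF
        rw [intervalIntegrable_iff_integrableOn_Ioc_of_le hz1.le]
        obtain ⟨C, hC⟩ := isCompact_Icc.exists_bound_of_continuousOn (hF.mono hsub)
        have hmeas : AEStronglyMeasurable (fun s => lam s • F s)
            (volume.restrict (Ioc t z)) := by
          exact (hlam_meas.aemeasurable.aestronglyMeasurable).smul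
            ((hF.mono (fun s hs => hsub ⟨hs.1.le, hs.2⟩)).aestronglyMeasurable
              measurableSet_Ioc)
        refine Integrable.mono' (g := fun _ : ℝ => C)
          (integrableOn_const measure_Ioc_lt_top.ne) hmeas ?_
        filter_upwards [ae_restrict_mem measurableSet_Ioc] with s hs
        have hs0 : s ≥ (0:ℝ) := le_trans ht hs.1.le
        have hl := hlam s hs0
        rw [norm_smul, Real.norm_eq_abs, abs_of_nonneg hl.1]
        calc lam s * ‖F s‖ ≤ 1 * ‖F s‖ := by
              have h0 : (0:ℝ) ≤ ‖F s‖ := norm_nonneg _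
              nlinarith [hl.2]
          _ = ‖F s‖ := one_mul _
          _ ≤ C := hC s ⟨hs.1.le, hs.2⟩
      have hφint : IntervalIntegrable (fun s => lam s • G s) volume t z := hInt G hGc
      have hcint : IntervalIntegrable (fun s => lam s • G t) volume t z :=
        hInt (fun _ => G t) continuousOn_const
      have hlamint : IntervalIntegrable lam volume t z := by
        rw [intervalIntegrable_iff_integrableOn_Ioc_of_le hz1.le]
        refine Integrable.mono' (g := fun _ : ℝ => (1:ℝ))
          (integrableOn_const measure_Ioc_lt_top.ne)
          hlam_meas.aemeasurable.aestronglyMeasurable ?_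
        filter_upwards [ae_restrict_mem measurableSet_Ioc] with s hs
        have hl := hlam s (le_trans ht hs.1.le)
        rw [Real.norm_eq_abs, abs_of_nonneg hl.1]; exact hl.2
      -- FTC
      have hftc : (∫ s in t..z, lam s • G s) = e (x z) - e (x t) := by
        refine intervalIntegral.integral_eq_sub_of_hasDerivAt
          (f := fun s => (e (x s) : UniformSpace.Completion H)) ?_ hφint
        intro s hs
        rw [uIcc_of_le hz1.le] at hs
        exact hy s (hsub hs)
      set μ : ℝ := ∫ s in t..z, lam s with hμdef
      have hμ0 : 0 ≤ μ :=
        intervalIntegral.integral_nonneg hz1.le (fun s hs => (hlam s (hsub hs).out).1)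
      have hμ1 : μ ≤ 1 := by
        have h1 : μ ≤ ∫ s in t..z, (1:ℝ) :=
          intervalIntegral.integral_mono_on hz1.le hlamint intervalIntegrable_const
            (fun s hs => (hlam s (hsub hs)).2)
        have h2 : (∫ s in t..z, (1:ℝ)) = z - t := by simp
        have h3 : z - t ≤ 1 := by
          have : z - t < min δ 1 := by linarith
          have := this.trans_le (min_le_right _ _)
          linarith
        linarith
      set E : UniformSpace.Completion H := ∫ s in t..z, lam s • (G s - G t) with hEdef
      have hEeq : E = (e (x z) - e (x t)) - μ • G t := by
        rw [hEdef]
        simp_rw [smul_sub]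
        rw [intervalIntegral.integral_sub hφint hcint, hftc,
          intervalIntegral.integral_smul_const]
      have hEnorm : ‖E‖ ≤ r/8 * |z - t| := by
        rw [hEdef]
        refine intervalIntegral.norm_integral_le_of_norm_le_const ?_
        intro s hs
        rw [uIoc_of_le hz1.le] at hs
        have hl := hlam s (le_trans ht hs.1.le)
        rw [norm_smul, Real.norm_eq_abs, abs_of_nonneg hl.1]
        have h1 : ‖G s - G t‖ = ‖g s - g t‖ := by
          rw [hGdef]; rw [← map_sub]; exact e.norm_map _
        have h2 : ‖g s - g t‖ ≤ r/8 := hgclose s ⟨hs.1.le, hs.2⟩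
        have h0 : (0:ℝ) ≤ ‖G s - G t‖ := norm_nonneg _
        nlinarith [hl.2]
      have hEnorm' : ‖E‖ ≤ r/8 * (z - t) := by
        rwa [abs_of_pos hzt] at hEnorm
      -- the key decomposition
      have hdecomp : g z = (T (x z) - T (x t)) + (g t - (x z - x t)) := by
        simp only [hgdef]; abel
      have hxznorm : ‖x z - x t‖ = ‖(e (x z) - e (x t) : UniformSpace.Completion H)‖ := by
        rw [← map_sub]; exact (e.norm_map _).symm
      have hbound1 : ‖x z - x t‖ ≤ μ * ‖g t‖ + ‖E‖ := by
        rw [hxznorm]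
        have : (e (x z) - e (x t) : UniformSpace.Completion H) = μ • G t + E := by
          rw [hEeq]; abel
        rw [this]
        calc ‖μ • G t + E‖ ≤ ‖μ • G t‖ + ‖E‖ := norm_add_le _ _
          _ = μ * ‖g t‖ + ‖E‖ := by
              rw [norm_smul, Real.norm_eq_abs, abs_of_nonneg hμ0, hGnorm]
      have hbound2 : ‖g t - (x z - x t)‖ ≤ (1 - μ) * ‖g t‖ + ‖E‖ := by
        have h1 : ‖g t - (x z - x t)‖ = ‖G t - (e (x z) - e (x t))‖ := by
          rw [hGdef, ← map_sub, ← map_sub]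
          exact (e.norm_map _).symm
        have h2 : (G t - (e (x z) - e (x t)) : UniformSpace.Completion H)
            = (1 - μ) • G t - E := by
          rw [hEeq, sub_smul, one_smul]; abel
        rw [h1, h2]
        calc ‖(1 - μ) • G t - E‖ ≤ ‖(1 - μ) • G t‖ + ‖E‖ := norm_sub_le _ _
          _ = (1 - μ) * ‖g t‖ + ‖E‖ := by
              rw [norm_smul, Real.norm_eq_abs, abs_of_nonneg (by linarith), hGnorm]
      have hmain : ‖g z‖ ≤ ‖g t‖ + 2 * ‖E‖ := by
        calc ‖g z‖ = ‖(T (x z) - T (x t)) + (g t - (x z - x t))‖ := by rw [← hdecomp]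
          _ ≤ ‖T (x z) - T (x t)‖ + ‖g t - (x z - x t)‖ := norm_add_le _ _
          _ ≤ ‖x z - x t‖ + ‖g t - (x z - x t)‖ := by linarith [hT (x z) (x t)]
          _ ≤ (μ * ‖g t‖ + ‖E‖) + ((1 - μ) * ‖g t‖ + ‖E‖) := by linarith
          _ = ‖g t‖ + 2 * ‖E‖ := by ring
      have hslope : slope (fun s => ‖g s‖) t z = (‖g z‖ - ‖g t‖) / (z - t) := by
        simp [slope_def_field]
      rw [hslope, div_lt_iff₀ hzt]
      nlinarith
    -- conclude antitonicity
    intro a ha b hb hab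
    have hIcc : Icc a b ⊆ Ici (0:ℝ) := fun s hs => le_trans ha hs.1
    have hcont : ContinuousOn (fun s => ‖g s‖) (Icc a b) := (hgc.mono hIcc).norm
    have := image_le_of_liminf_slope_right_le_deriv_boundary (f := fun s => ‖g s‖)
      (a := a) (b := b) (B := fun _ => ‖g a‖) (B' := fun _ => 0) hcont le_rfl
      continuousOn_const (fun s _ => hasDerivWithinAt_const _ _ _)
      (fun s hs r hr => ((key s (le_trans ha hs.1) r hr).frequently))
    exact this ⟨hab, le_refl b⟩
  · -- a.e. differential inequality
    filter_upwards [hTd, ae_restrict_mem measurableSet_Ici] with t htd ht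
    obtain ⟨u, hu, hun⟩ := htd
    intro D hD
    have hgd : HasDerivAt g (u - xd t) t := hu.sub (hx t ht)
    have hinner : HasDerivAt (fun s => ⟪g s, g s⟫)
        (⟪g t, u - xd t⟫ + ⟪u - xd t, g t⟫) t := hgd.inner ℝ hgd
    have hF : HasDerivAt (fun s => (1/2 : ℝ) * ‖g s‖ ^ 2)
        ((1/2) * (⟪g t, u - xd t⟫ + ⟪u - xd t, g t⟫)) t := by
      have heq : (fun s => (1/2 : ℝ) * ‖g s‖ ^ 2) = fun s => (1/2 : ℝ) * ⟪g s, g s⟫ := by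
        funext s; rw [real_inner_self_eq_norm_sq]
      rw [heq]
      exact hinner.const_mul (1/2 : ℝ)
    have hDval : D = ⟪u - xd t, g t⟫ := by
      have := hD.unique hF
      rw [this, real_inner_comm (g t) (u - xd t)]
      ring
    have hxdg : ⟪xd t, g t⟫ = lam t * ‖g t‖ ^ 2 := by
      rw [hode t ht, real_inner_smul_left, real_inner_self_eq_norm_sq]
    have hub : ⟪u, g t⟫ ≤ ‖xd t‖ * ‖g t‖ := by
      calc ⟪u, g t⟫ ≤ ‖u‖ * ‖g t‖ := real_inner_le_norm _ _
        _ ≤ ‖xd t‖ * ‖g t‖ := by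
            have := norm_nonneg (g t); nlinarith
    have hxdnorm : ‖xd t‖ = lam t * ‖g t‖ := by
      rw [hode t ht, norm_smul, Real.norm_eq_abs, abs_of_nonneg (hlam t ht).1]
    constructor
    · rw [hDval, inner_sub_left, hxdg]
      linarith
    · rw [hxdnorm]
      have hz : -lam t * ‖g t‖ ^ 2 + lam t * ‖g t‖ * ‖g t‖ = 0 := by ring
      linarith
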